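/- Consider the square pyramid in ℝ³ with apex A=(0,0,α) and base vertices B=(β,0,0), C=(0,γ,0), D=(−β,0,0), E=(0,−γ,0), where α, β, γ > 0. For any interior point P=(x,y,z), the sum of the distances from P to the five faces equals (1 − 4βγ/Δ)·z + 4αβγ/Δ, where Δ = √(α²γ² + α²β² + β²γ²). In particular this sum is constant if and only if α = √15·βγ/√(β²+γ²). -/

import Mathlib

open Metric
open scoped RealInnerProductSpace

noncomputable section

abbrev E3 := EuclideanSpace ℝ (Fin 3)

def pt3 (x y z : ℝ) : E3 := WithLp.toLp 2 ![x, y, z]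

/-- The sum of the distances from `P` to the planes containing the five faces of the
pyramid with apex `A=(0,0,α)` and base vertices `B=(β,0,0)`, `C=(0,γ,0)`, `D=(-β,0,0)`,
`E=(0,-γ,0)`: the base `BCDE` and the lateral faces `ABC`, `ACD`, `ADE`, `AEB`. -/
def pyrSum (α β γ : ℝ) (P : E3) : ℝ :=
  infDist P (affineSpan ℝ {pt3 β 0 0, pt3 0 γ 0, pt3 (-β) 0 0} : Set E3)
    + infDist P (affineSpan ℝ {pt3 0 0 α, pt3 β 0 0, pt3 0 γ 0} : Set E3)
    + infDist P (affineSpan ℝ {pt3 0 0 α, pt3 0 γ 0, pt3 (-β) 0 0} : Set E3)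
    + infDist P (affineSpan ℝ {pt3 0 0 α, pt3 (-β) 0 0, pt3 0 (-γ) 0} : Set E3)
    + infDist P (affineSpan ℝ {pt3 0 0 α, pt3 0 (-γ) 0, pt3 β 0 0} : Set E3)

/-- The interior of the solid pyramid `ABCDE`. -/
def pyrInterior (α β γ : ℝ) : Set E3 :=
  interior (convexHull ℝ
    ({pt3 0 0 α, pt3 β 0 0, pt3 0 γ 0, pt3 (-β) 0 0, pt3 0 (-γ) 0} : Set E3))

-- hyperplane as affine subspace
def hplane (n : E3) (c : ℝ) : AffineSubspace ℝ E3 where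
  carrier := {p | ⟪n, p⟫ = c}
  smul_vsub_vadd_mem' := by
    intro t p₁ p₂ p₃ h1 h2 h3
    simp only [Set.mem_setOf_eq] at *
    simp [vsub_eq_sub, vadd_eq_add, inner_add_right, inner_sub_right, inner_smul_right, h1, h2, h3]

lemma infDist_hplane (n : E3) (hn : n ≠ 0) (c : ℝ) (P : E3) :
    infDist P {p : E3 | ⟪n, p⟫ = c} = |⟪n, P⟫ - c| / ‖n‖ := by
  have hnn : (0:ℝ) < ‖n‖ := norm_pos_iff.mpr hn
  set Q : E3 := P - ((⟪n, P⟫ - c) / ‖n‖^2) • n with hQ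
  have hQmem : Q ∈ {p : E3 | ⟪n, p⟫ = c} := by
    simp only [Set.mem_setOf_eq, hQ, inner_sub_right, inner_smul_right,
      real_inner_self_eq_norm_sq]
    field_simp
    ring
  have hdQ : dist P Q = |⟪n, P⟫ - c| / ‖n‖ := by
    rw [dist_eq_norm]
    have : P - Q = ((⟪n, P⟫ - c) / ‖n‖^2) • n := by rw [hQ]; abel
    rw [this, norm_smul]
    rw [Real.norm_eq_abs, abs_div, abs_pow, abs_norm]
    field_simp
  refine le_antisymm (hdQ ▸ infDist_le_dist_of_mem hQmem) ?_
  by_contra hlt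
  push_neg at hlt
  obtain ⟨R, hR, hdR⟩ := (infDist_lt_iff ⟨Q, hQmem⟩).1 hlt
  refine absurd hdR (not_lt.2 ?_)
  simp only [Set.mem_setOf_eq] at hR
  have h1 : |⟪n, P⟫ - c| = |⟪n, P - R⟫| := by rw [inner_sub_right, hR]
  have h2 : |⟪n, P - R⟫| ≤ ‖n‖ * ‖P - R‖ := abs_real_inner_le_norm n (P - R)
  rw [dist_eq_norm, div_le_iff₀ hnn]
  calc |⟪n, P⟫ - c| = |⟪n, P - R⟫| := h1
    _ ≤ ‖n‖ * ‖P - R‖ := h2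
    _ = ‖P - R‖ * ‖n‖ := by ring

lemma span_eq_hplane (p1 p2 p3 n : E3) (c : ℝ)
    (h1 : ⟪n, p1⟫ = c) (h2 : ⟪n, p2⟫ = c) (h3 : ⟪n, p3⟫ = c)
    (hsurj : ∀ p : E3, ⟪n, p⟫ = c → ∃ s t : ℝ, p = s • (p2 - p1) + t • (p3 - p1) + p1) :
    (affineSpan ℝ {p1, p2, p3} : Set E3) = {p : E3 | ⟪n, p⟫ = c} := by
  apply le_antisymm
  · have hle : affineSpan ℝ {p1, p2, p3} ≤ hplane n c := by
      rw [affineSpan_le]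
      intro p hp
      rcases hp with rfl | rfl | rfl
      exacts [h1, h2, h3]
    exact hle
  · intro p hp
    obtain ⟨s, t, hpe⟩ := hsurj p hp
    have hp1 : p1 ∈ affineSpan ℝ ({p1, p2, p3} : Set E3) :=
      subset_affineSpan ℝ _ (by simp)
    have hv : s • (p2 - p1) + t • (p3 - p1) ∈ (affineSpan ℝ ({p1, p2, p3} : Set E3)).direction := by
      rw [direction_affineSpan]
      have h2' : p2 - p1 ∈ vectorSpan ℝ ({p1, p2, p3} : Set E3) := by
        rw [← vsub_eq_sub]; exact vsub_mem_vectorSpan ℝ (by simp) (by simp)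
      have h3' : p3 - p1 ∈ vectorSpan ℝ ({p1, p2, p3} : Set E3) := by
        rw [← vsub_eq_sub]; exact vsub_mem_vectorSpan ℝ (by simp) (by simp)
      exact Submodule.add_mem _ (Submodule.smul_mem _ _ h2') (Submodule.smul_mem _ _ h3')
    have := AffineSubspace.vadd_mem_of_mem_direction hv hp1
    rwa [vadd_eq_add, ← hpe] at this

lemma inner_pt3 (a b c : ℝ) (p : E3) : ⟪pt3 a b c, p⟫ = a * p 0 + b * p 1 + c * p 2 := by
  simp [PiLp.inner_apply, Fin.sum_univ_three, pt3]
  ring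

lemma norm_pt3 (a b c : ℝ) : ‖pt3 a b c‖ = Real.sqrt (a^2 + b^2 + c^2) := by
  simp [EuclideanSpace.norm_eq, pt3, Fin.sum_univ_three]

lemma pt3_ne_zero_of_last (a b c : ℝ) (hc : c ≠ 0) : pt3 a b c ≠ 0 := by
  intro h
  have := congrArg (fun v : E3 => v 2) h
  simp [pt3] at this
  exact hc this

lemma infDist_face (p1 p2 p3 : E3) (n : E3) (c : ℝ) (hn : n ≠ 0)
    (h1 : ⟪n, p1⟫ = c) (h2 : ⟪n, p2⟫ = c) (h3 : ⟪n, p3⟫ = c)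
    (hsurj : ∀ p : E3, ⟪n, p⟫ = c → ∃ s t : ℝ, p = s • (p2 - p1) + t • (p3 - p1) + p1)
    (P : E3) :
    infDist P (affineSpan ℝ {p1, p2, p3} : Set E3) = |⟪n, P⟫ - c| / ‖n‖ := by
  rw [span_eq_hplane p1 p2 p3 n c h1 h2 h3 hsurj, infDist_hplane n hn c P]

lemma dist_base (β γ : ℝ) (hβ : β ≠ 0) (hγ : γ ≠ 0) (P : E3) :
    infDist P (affineSpan ℝ {pt3 β 0 0, pt3 0 γ 0, pt3 (-β) 0 0} : Set E3) = |P 2| := by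
  have h := infDist_face (pt3 β 0 0) (pt3 0 γ 0) (pt3 (-β) 0 0) (pt3 0 0 1) 0
    (pt3_ne_zero_of_last 0 0 1 one_ne_zero)
    (by rw [inner_pt3]; simp [pt3])
    (by rw [inner_pt3]; simp [pt3])
    (by rw [inner_pt3]; simp [pt3])
    (by
      intro p hp
      rw [inner_pt3] at hp
      simp only [zero_mul, one_mul, zero_add] at hp
      refine ⟨p 1 / γ, (β - (p 1 / γ) * β - p 0) / (2 * β), ?_⟩
      ext i
      fin_cases i <;> simp [pt3]
      · field_simp; ring
      · field_simp
      · linarith [hp]) P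
  rw [h, inner_pt3, norm_pt3]
  simp

lemma dist_ABC (α β γ : ℝ) (hα : α ≠ 0) (hβ : β ≠ 0) (hγ : γ ≠ 0) (P : E3) :
    infDist P (affineSpan ℝ {pt3 0 0 α, pt3 β 0 0, pt3 0 γ 0} : Set E3)
      = |α*γ * P 0 + α*β * P 1 + β*γ * P 2 - α*β*γ|
        / Real.sqrt (α^2*γ^2 + α^2*β^2 + β^2*γ^2) := by
  have h := infDist_face (pt3 0 0 α) (pt3 β 0 0) (pt3 0 γ 0)
    (pt3 (α*γ) (α*β) (β*γ)) (α*β*γ)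
    (pt3_ne_zero_of_last _ _ _ (mul_ne_zero hβ hγ))
    (by rw [inner_pt3]; simp [pt3]; try ring)
    (by rw [inner_pt3]; simp [pt3]; try ring)
    (by rw [inner_pt3]; simp [pt3]; try ring)
    (by
      intro p hp
      rw [inner_pt3] at hp
      refine ⟨p 0 / β, p 1 / γ, ?_⟩
      ext i
      fin_cases i <;> simp [pt3]
      · field_simp
      · field_simp
      · field_simp; nlinarith [hp]) P
  rw [h, inner_pt3, norm_pt3]
  congr 2
  ring

lemma dist_ACD (α β γ : ℝ) (hα : α ≠ 0) (hβ : β ≠ 0) (hγ : γ ≠ 0) (P : E3) :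
    infDist P (affineSpan ℝ {pt3 0 0 α, pt3 0 γ 0, pt3 (-β) 0 0} : Set E3)
      = |-(α*γ) * P 0 + α*β * P 1 + β*γ * P 2 - α*β*γ|
        / Real.sqrt (α^2*γ^2 + α^2*β^2 + β^2*γ^2) := by
  have h := infDist_face (pt3 0 0 α) (pt3 0 γ 0) (pt3 (-β) 0 0)
    (pt3 (-(α*γ)) (α*β) (β*γ)) (α*β*γ)
    (pt3_ne_zero_of_last _ _ _ (mul_ne_zero hβ hγ))
    (by rw [inner_pt3]; simp [pt3]; try ring)
    (by rw [inner_pt3]; simp [pt3]; try ring)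
    (by rw [inner_pt3]; simp [pt3]; try ring)
    (by
      intro p hp
      rw [inner_pt3] at hp
      refine ⟨p 1 / γ, -(p 0) / β, ?_⟩
      ext i
      fin_cases i <;> simp [pt3]
      · field_simp
      · field_simp
      · field_simp; nlinarith [hp]) P
  rw [h, inner_pt3, norm_pt3]
  congr 2
  ring

lemma dist_ADE (α β γ : ℝ) (hα : α ≠ 0) (hβ : β ≠ 0) (hγ : γ ≠ 0) (P : E3) :
    infDist P (affineSpan ℝ {pt3 0 0 α, pt3 (-β) 0 0, pt3 0 (-γ) 0} : Set E3)
      = |-(α*γ) * P 0 + -(α*β) * P 1 + β*γ * P 2 - α*β*γ|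
        / Real.sqrt (α^2*γ^2 + α^2*β^2 + β^2*γ^2) := by
  have h := infDist_face (pt3 0 0 α) (pt3 (-β) 0 0) (pt3 0 (-γ) 0)
    (pt3 (-(α*γ)) (-(α*β)) (β*γ)) (α*β*γ)
    (pt3_ne_zero_of_last _ _ _ (mul_ne_zero hβ hγ))
    (by rw [inner_pt3]; simp [pt3]; try ring)
    (by rw [inner_pt3]; simp [pt3]; try ring)
    (by rw [inner_pt3]; simp [pt3]; try ring)
    (by
      intro p hp
      rw [inner_pt3] at hp
      refine ⟨-(p 0) / β, -(p 1) / γ, ?_⟩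
      ext i
      fin_cases i <;> simp [pt3]
      · field_simp
      · field_simp
      · field_simp; nlinarith [hp]) P
  rw [h, inner_pt3, norm_pt3]
  congr 2
  ring

lemma dist_AEB (α β γ : ℝ) (hα : α ≠ 0) (hβ : β ≠ 0) (hγ : γ ≠ 0) (P : E3) :
    infDist P (affineSpan ℝ {pt3 0 0 α, pt3 0 (-γ) 0, pt3 β 0 0} : Set E3)
      = |α*γ * P 0 + -(α*β) * P 1 + β*γ * P 2 - α*β*γ|
        / Real.sqrt (α^2*γ^2 + α^2*β^2 + β^2*γ^2) := by
  have h := infDist_face (pt3 0 0 α) (pt3 0 (-γ) 0) (pt3 β 0 0)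
    (pt3 (α*γ) (-(α*β)) (β*γ)) (α*β*γ)
    (pt3_ne_zero_of_last _ _ _ (mul_ne_zero hβ hγ))
    (by rw [inner_pt3]; simp [pt3]; try ring)
    (by rw [inner_pt3]; simp [pt3]; try ring)
    (by rw [inner_pt3]; simp [pt3]; try ring)
    (by
      intro p hp
      rw [inner_pt3] at hp
      refine ⟨-(p 1) / γ, p 0 / β, ?_⟩
      ext i
      fin_cases i <;> simp [pt3]
      · field_simp
      · field_simp
      · field_simp; nlinarith [hp]) P
  rw [h, inner_pt3, norm_pt3]
  congr 2
  ring

lemma interior_strict (n : E3) (hn : n ≠ 0) (c : ℝ) (S : Set E3)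
    (hS : ∀ v ∈ S, ⟪n, v⟫ ≤ c) {P : E3} (hP : P ∈ interior (convexHull ℝ S)) :
    ⟪n, P⟫ < c := by
  have hlin : IsLinearMap ℝ (fun p : E3 => ⟪n, p⟫) :=
    ⟨fun u v => inner_add_right n u v, fun r u => real_inner_smul_right n u r⟩
  have hhull : convexHull ℝ S ⊆ {p : E3 | ⟪n, p⟫ ≤ c} :=
    convexHull_min hS (convex_halfSpace_le hlin c)
  rw [mem_interior_iff_mem_nhds, Metric.mem_nhds_iff] at hP
  obtain ⟨ε, hε, hball⟩ := hP
  have hnn : (0:ℝ) < ‖n‖ := norm_pos_iff.mpr hn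
  set Q : E3 := P + (ε / (2 * ‖n‖)) • n with hQ
  have hQball : Q ∈ ball P ε := by
    rw [mem_ball, dist_eq_norm]
    have : Q - P = (ε / (2 * ‖n‖)) • n := by rw [hQ]; abel
    rw [this, norm_smul, Real.norm_eq_abs, abs_of_pos (by positivity)]
    rw [div_mul_eq_mul_div]
    have heq : ε * ‖n‖ / (2 * ‖n‖) = ε / 2 := by
      field_simp
    rw [heq]; linarith
  have hQc : ⟪n, Q⟫ ≤ c := hhull (hball hQball)
  rw [hQ, inner_add_right, real_inner_smul_right, real_inner_self_eq_norm_sq] at hQc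
  have : 0 < ε / (2 * ‖n‖) * ‖n‖ ^ 2 := by positivity
  linarith

lemma coord_dist_le (p q : E3) (i : Fin 3) : |p i - q i| ≤ dist p q := by
  rw [EuclideanSpace.dist_eq]
  have h1 : |p i - q i| = Real.sqrt (dist (p i) (q i) ^ 2) := by
    rw [Real.sqrt_sq (dist_nonneg), Real.dist_eq]
  rw [h1]
  apply Real.sqrt_le_sqrt
  exact Finset.single_le_sum (f := fun j => dist (p j) (q j) ^ 2)
    (fun j _ => sq_nonneg _) (Finset.mem_univ i)

lemma axis_mem (α β γ : ℝ) (hα : 0 < α) (hβ : 0 < β) (hγ : 0 < γ) (t : ℝ)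
    (ht0 : 0 < t) (ht1 : t < α) : pt3 0 0 t ∈ pyrInterior α β γ := by
  set V : Set E3 := {pt3 0 0 α, pt3 β 0 0, pt3 0 γ 0, pt3 (-β) 0 0, pt3 0 (-γ) 0} with hV
  set K : ℝ := 1/α + 1/β + 1/γ with hK
  have hKpos : 0 < K := by positivity
  have hslack : 0 < 1 - t/α := by
    have : t/α < 1 := (div_lt_one hα).mpr ht1
    linarith
  set δ : ℝ := min t ((1 - t/α) / K) with hδdef
  have hδ : 0 < δ := lt_min ht0 (by positivity)
  rw [pyrInterior, mem_interior]
  refine ⟨ball (pt3 0 0 t) δ, ?_, isOpen_ball, mem_ball_self hδ⟩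
  intro p hp
  rw [mem_ball] at hp
  have hb : ∀ i : Fin 3, |p i - pt3 0 0 t i| < δ :=
    fun i => lt_of_le_of_lt (coord_dist_le p (pt3 0 0 t) i) hp
  have h0 : |p 0| < δ := by have := hb 0; simpa [pt3] using this
  have h1 : |p 1| < δ := by have := hb 1; simpa [pt3] using this
  have h2 : |p 2 - t| < δ := by have := hb 2; simpa [pt3] using this
  set r : ℝ := 1 - p 2/α - |p 0|/β - |p 1|/γ with hr
  have hδt : δ ≤ t := min_le_left _ _
  have hδK : δ * K ≤ 1 - t/α := by
    rw [← le_div_iff₀ hKpos]; exact min_le_right _ _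
  have hp2 : 0 ≤ p 2 := by
    have := abs_lt.1 h2
    linarith
  have hrpos : 0 ≤ r := by
    rw [hr]
    have h2' : p 2 < t + δ := by have := lt_of_le_of_lt (le_abs_self _) h2; linarith
    have e1 : p 2 / α ≤ (t + δ) / α := by gcongr
    have e2 : |p 0| / β ≤ δ / β := by gcongr

    have e3 : |p 1| / γ ≤ δ / γ := by gcongr
    have eK : δ / α + δ / β + δ / γ = δ * K := by rw [hK]; ring
    have : t / α + δ * K ≤ 1 := by linarith
    have ht' : p 2 / α = t / α + (p 2 - t) / α := by ring
    have e4 : (p 2 - t) / α ≤ δ / α := by gcongr; linarith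
    linarith
  clear_value r
  set w : Fin 5 → ℝ := ![p 2 / α, (|p 0| + p 0)/(2*β) + r/2, (|p 1| + p 1)/(2*γ),
    (|p 0| - p 0)/(2*β) + r/2, (|p 1| - p 1)/(2*γ)] with hw
  set zz : Fin 5 → E3 := ![pt3 0 0 α, pt3 β 0 0, pt3 0 γ 0, pt3 (-β) 0 0, pt3 0 (-γ) 0] with hz
  have habs0 : -|p 0| ≤ p 0 := neg_abs_le _
  have habs0' : p 0 ≤ |p 0| := le_abs_self _
  have habs1 : -|p 1| ≤ p 1 := neg_abs_le _
  have habs1' : p 1 ≤ |p 1| := le_abs_self _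
  have hwnn : ∀ i ∈ (Finset.univ : Finset (Fin 5)), 0 ≤ w i := by
    intro i _
    fin_cases i
    · show (0:ℝ) ≤ p 2 / α; positivity
    · show (0:ℝ) ≤ (|p 0| + p 0)/(2*β) + r/2
      have h' : (0:ℝ) ≤ (|p 0| + p 0)/(2*β) := by
        apply div_nonneg (by linarith) (by linarith)
      linarith
    · show (0:ℝ) ≤ (|p 1| + p 1)/(2*γ)
      apply div_nonneg (by linarith) (by linarith)
    · show (0:ℝ) ≤ (|p 0| - p 0)/(2*β) + r/2
      have h' : (0:ℝ) ≤ (|p 0| - p 0)/(2*β) := by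
        apply div_nonneg (by linarith) (by linarith)
      linarith
    · show (0:ℝ) ≤ (|p 1| - p 1)/(2*γ)
      apply div_nonneg (by linarith) (by linarith)
  have hwsum : ∑ i : Fin 5, w i = 1 := by
    rw [hw]
    simp [Fin.sum_univ_five]
    rw [hr]
    field_simp
    ring
  have hzmem : ∀ i ∈ (Finset.univ : Finset (Fin 5)), zz i ∈ convexHull ℝ V := by
    intro i _
    apply subset_convexHull
    fin_cases i <;> simp [hz, hV, Set.mem_insert_iff]
  have hmem := (convex_convexHull ℝ V).sum_mem hwnn hwsum hzmem
  have hpe : p = ∑ i : Fin 5, w i • zz i := by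
    ext j
    rw [Fin.sum_univ_five]
    fin_cases j <;>
      simp [hw, hz, pt3] <;> field_simp <;> ring
  rw [hpe]
  exact hmem

lemma vertex_bound (α β γ a b c cc : ℝ)
    (hA : a * 0 + b * 0 + c * α ≤ cc) (hB : a * β + b * 0 + c * 0 ≤ cc)
    (hC : a * 0 + b * γ + c * 0 ≤ cc) (hD : a * (-β) + b * 0 + c * 0 ≤ cc)
    (hE : a * 0 + b * (-γ) + c * 0 ≤ cc) :
    ∀ v ∈ ({pt3 0 0 α, pt3 β 0 0, pt3 0 γ 0, pt3 (-β) 0 0, pt3 0 (-γ) 0} : Set E3),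
      ⟪pt3 a b c, v⟫ ≤ cc := by
  intro v hv
  rcases hv with rfl | rfl | rfl | rfl | rfl <;> rw [inner_pt3] <;>
    simp only [pt3, PiLp.toLp_apply, Matrix.cons_val_zero, Matrix.cons_val_one, Matrix.head_cons,
      Matrix.cons_val_two, Matrix.tail_cons] <;> assumption

lemma pyrSum_formula (α β γ : ℝ) (hα : 0 < α) (hβ : 0 < β) (hγ : 0 < γ)
    (x y z : ℝ) (hP : pt3 x y z ∈ pyrInterior α β γ) :
    pyrSum α β γ (pt3 x y z) =
      (1 - 4 * β * γ / Real.sqrt (α ^ 2 * γ ^ 2 + α ^ 2 * β ^ 2 + β ^ 2 * γ ^ 2)) * z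
        + 4 * α * β * γ / Real.sqrt (α ^ 2 * γ ^ 2 + α ^ 2 * β ^ 2 + β ^ 2 * γ ^ 2) := by
  have hs : (0:ℝ) < α ^ 2 * γ ^ 2 + α ^ 2 * β ^ 2 + β ^ 2 * γ ^ 2 := by positivity
  have hΔ : 0 < Real.sqrt (α ^ 2 * γ ^ 2 + α ^ 2 * β ^ 2 + β ^ 2 * γ ^ 2) :=
    Real.sqrt_pos.2 hs
  rw [pyrInterior] at hP
  -- strict inequalities
  have hz : (0:ℝ) < z := by
    have := interior_strict (pt3 0 0 (-1)) (pt3_ne_zero_of_last _ _ _ (by norm_num)) 0 _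
      (vertex_bound α β γ 0 0 (-1) 0 (by nlinarith) (by nlinarith) (by nlinarith)
        (by nlinarith) (by nlinarith)) hP
    rw [inner_pt3] at this
    simp only [pt3, PiLp.toLp_apply, Matrix.cons_val_zero, Matrix.cons_val_one, Matrix.head_cons,
      Matrix.cons_val_two, Matrix.tail_cons] at this
    nlinarith
  have key : ∀ a b : ℝ, a^2 = (α*γ)^2 → b^2 = (α*β)^2 →
      (∀ v ∈ ({pt3 0 0 α, pt3 β 0 0, pt3 0 γ 0, pt3 (-β) 0 0, pt3 0 (-γ) 0} : Set E3),
        ⟪pt3 a b (β*γ), v⟫ ≤ α*β*γ) →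
      a * x + b * y + β*γ*z < α*β*γ := by
    intro a b _ _ hvb
    have := interior_strict (pt3 a b (β*γ))
      (pt3_ne_zero_of_last _ _ _ (by positivity)) (α*β*γ) _ hvb hP
    rw [inner_pt3] at this
    simp only [pt3, PiLp.toLp_apply, Matrix.cons_val_zero, Matrix.cons_val_one, Matrix.head_cons,
      Matrix.cons_val_two, Matrix.tail_cons] at this
    linarith
  have h1 : α*γ * x + α*β * y + β*γ*z < α*β*γ := by
    apply key _ _ rfl rfl
    apply vertex_bound <;> nlinarith [mul_pos (mul_pos hα hβ) hγ]
  have h2 : -(α*γ) * x + α*β * y + β*γ*z < α*β*γ := by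
    apply key _ _ (by ring) rfl
    apply vertex_bound <;> nlinarith [mul_pos (mul_pos hα hβ) hγ]
  have h3 : -(α*γ) * x + -(α*β) * y + β*γ*z < α*β*γ := by
    apply key _ _ (by ring) (by ring)
    apply vertex_bound <;> nlinarith [mul_pos (mul_pos hα hβ) hγ]
  have h4 : α*γ * x + -(α*β) * y + β*γ*z < α*β*γ := by
    apply key _ _ rfl (by ring)
    apply vertex_bound <;> nlinarith [mul_pos (mul_pos hα hβ) hγ]
  rw [pyrSum, dist_base β γ hβ.ne' hγ.ne', dist_ABC α β γ hα.ne' hβ.ne' hγ.ne',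
    dist_ACD α β γ hα.ne' hβ.ne' hγ.ne', dist_ADE α β γ hα.ne' hβ.ne' hγ.ne',
    dist_AEB α β γ hα.ne' hβ.ne' hγ.ne']
  have e0 : (pt3 x y z) 0 = x := rfl
  have e1 : (pt3 x y z) 1 = y := rfl
  have e2 : (pt3 x y z) 2 = z := rfl
  rw [e0, e1, e2]
  rw [abs_of_pos hz, abs_of_neg (by linarith), abs_of_neg (by linarith),
    abs_of_neg (by linarith), abs_of_neg (by linarith)]
  field_simp
  ring

lemma eta3 (P : E3) : P = pt3 (P 0) (P 1) (P 2) := by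
  ext i; fin_cases i <;> rfl

/-- For the pyramid with apex `A=(0,0,α)` and base vertices `B=(β,0,0)`, `C=(0,γ,0)`,
`D=(-β,0,0)`, `E=(0,-γ,0)` (`α,β,γ>0`), the sum of distances from an interior point
`P=(x,y,z)` to the five faces equals `(1 - 4βγ/Δ)·z + 4αβγ/Δ`, where
`Δ = √(α²γ² + α²β² + β²γ²)`; in particular it is constant if and only if
`α = √15·βγ/√(β²+γ²)`. -/
theorem pyramid_viviani (α β γ : ℝ) (hα : 0 < α) (hβ : 0 < β) (hγ : 0 < γ) :
    (∀ x y z : ℝ, pt3 x y z ∈ pyrInterior α β γ →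
      pyrSum α β γ (pt3 x y z) =
        (1 - 4 * β * γ / Real.sqrt (α ^ 2 * γ ^ 2 + α ^ 2 * β ^ 2 + β ^ 2 * γ ^ 2)) * z
          + 4 * α * β * γ / Real.sqrt (α ^ 2 * γ ^ 2 + α ^ 2 * β ^ 2 + β ^ 2 * γ ^ 2)) ∧
    ((∀ P ∈ pyrInterior α β γ, ∀ Q ∈ pyrInterior α β γ,
        pyrSum α β γ P = pyrSum α β γ Q)
      ↔ α = Real.sqrt 15 * β * γ / Real.sqrt (β ^ 2 + γ ^ 2)) := by
  have hs : (0:ℝ) < α ^ 2 * γ ^ 2 + α ^ 2 * β ^ 2 + β ^ 2 * γ ^ 2 := by positivity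
  have hΔ : 0 < Real.sqrt (α ^ 2 * γ ^ 2 + α ^ 2 * β ^ 2 + β ^ 2 * γ ^ 2) :=
    Real.sqrt_pos.2 hs
  set Δ := Real.sqrt (α ^ 2 * γ ^ 2 + α ^ 2 * β ^ 2 + β ^ 2 * γ ^ 2) with hΔdef
  have hΔsq : Δ ^ 2 = α ^ 2 * γ ^ 2 + α ^ 2 * β ^ 2 + β ^ 2 * γ ^ 2 :=
    Real.sq_sqrt hs.le
  refine ⟨fun x y z h => pyrSum_formula α β γ hα hβ hγ x y z h, ?_, ?_⟩
  · intro hconst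
    have hP := axis_mem α β γ hα hβ hγ (α/4) (by positivity) (by linarith)
    have hQ := axis_mem α β γ hα hβ hγ (α/2) (by positivity) (by linarith)
    have heq := hconst _ hP _ hQ
    rw [pyrSum_formula α β γ hα hβ hγ 0 0 (α/4) hP,
      pyrSum_formula α β γ hα hβ hγ 0 0 (α/2) hQ] at heq
    have h0 : (1 - 4*β*γ/Δ) * (α/4) = (1 - 4*β*γ/Δ) * (α/2) := by linarith
    have hk : (1 - 4*β*γ/Δ) * α = 0 := by linear_combination (-4 : ℝ) * h0
    have hk' : 1 - 4*β*γ/Δ = 0 := by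
      rcases mul_eq_zero.1 hk with h | h
      · exact h
      · exact absurd h hα.ne'
    have hΔval : Δ = 4*β*γ := by
      have : 4*β*γ/Δ = 1 := by linarith
      field_simp at this
      linarith
    have hsval : α ^ 2 * γ ^ 2 + α ^ 2 * β ^ 2 + β ^ 2 * γ ^ 2 = 16 * β^2 * γ^2 := by
      rw [← hΔsq, hΔval]; ring
    have h15 : α^2 * (β^2 + γ^2) = 15 * β^2 * γ^2 := by nlinarith [hsval]
    have hbg : (0:ℝ) < β^2 + γ^2 := by positivity
    set R := Real.sqrt 15 * β * γ / Real.sqrt (β ^ 2 + γ ^ 2) with hR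
    have hRpos : 0 < R := by
      rw [hR]
      have h15p : (0:ℝ) < Real.sqrt 15 := Real.sqrt_pos.2 (by norm_num)
      have hbgp : (0:ℝ) < Real.sqrt (β^2+γ^2) := Real.sqrt_pos.2 hbg
      positivity
    have hR2 : R ^ 2 = 15 * β^2 * γ^2 / (β^2 + γ^2) := by
      rw [hR, div_pow, mul_pow, mul_pow, Real.sq_sqrt (by norm_num : (15:ℝ) ≥ 0),
        Real.sq_sqrt hbg.le]
    have hα2 : α ^ 2 = R ^ 2 := by
      rw [hR2]
      field_simp
      linarith
    calc α = Real.sqrt (α ^ 2) := (Real.sqrt_sq hα.le).symm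
      _ = Real.sqrt (R ^ 2) := by rw [hα2]
      _ = R := Real.sqrt_sq hRpos.le
  · intro hval P hP Q hQ
    have hbg : (0:ℝ) < β^2 + γ^2 := by positivity
    have hα2 : α ^ 2 = 15 * β^2 * γ^2 / (β^2 + γ^2) := by
      rw [hval, div_pow, mul_pow, mul_pow, Real.sq_sqrt (by norm_num : (15:ℝ) ≥ 0),
        Real.sq_sqrt hbg.le]
    have hsval : α ^ 2 * γ ^ 2 + α ^ 2 * β ^ 2 + β ^ 2 * γ ^ 2 = 16 * β^2 * γ^2 := by
      field_simp at hα2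
      nlinarith [hα2]
    have hΔval : Δ = 4*β*γ := by
      rw [hΔdef, hsval]
      rw [show (16:ℝ) * β^2*γ^2 = (4*β*γ)^2 by ring]
      exact Real.sqrt_sq (by positivity)
    have fP := pyrSum_formula α β γ hα hβ hγ (P 0) (P 1) (P 2) (by rw [← eta3]; exact hP)
    have fQ := pyrSum_formula α β γ hα hβ hγ (Q 0) (Q 1) (Q 2) (by rw [← eta3]; exact hQ)
    rw [← eta3] at fP fQ
    rw [fP, fQ, ← hΔdef, hΔval]
    have hne : (4:ℝ)*β*γ ≠ 0 := by positivity
    field_simp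
    ring
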